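/- Let δ ∈ (0,1) be a real number and let n, m, ℓ be positive integers. Sample m independent uniformly random functions f_1,…,f_m : Fin ℓ → Fin n and let S_i be the image of f_i. Then the probability that |S_1 ∪ ⋯ ∪ S_m| < 0.01·δ·m·ℓ is at most (0.01·δ·m·ℓ / n^{1−0.01δ})^{mℓ}. -/

import Mathlib

/-- Sampling `m` independent uniformly random functions `f i : Fin ℓ → Fin n` (with `S i` the
image of `f i`), the probability that `|S 1 ∪ ⋯ ∪ S m| < 0.01·δ·m·ℓ` is at most
`(0.01·δ·m·ℓ / n^(1 − 0.01δ))^(mℓ)`. -/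
theorem stmt_4 (δ : ℝ) (hδ : δ ∈ Set.Ioo (0 : ℝ) 1) (n m ℓ : ℕ)
    (hn : 0 < n) (hm : 0 < m) (hℓ : 0 < ℓ) :
    ((Nat.card {f : Fin m → Fin ℓ → Fin n //
        ((Finset.univ.biUnion (fun i => Finset.image (f i) Finset.univ)).card : ℝ)
          < 0.01 * δ * m * ℓ} : ℝ)
      / (Nat.card (Fin m → Fin ℓ → Fin n) : ℝ))
      ≤ (0.01 * δ * m * ℓ / (n : ℝ) ^ ((1 : ℝ) - 0.01 * δ)) ^ (m * ℓ) := by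
  classical
  have hδ0 := hδ.1
  have hδ1 := hδ.2
  set t : ℝ := 0.01 * δ * m * ℓ with ht
  have ht0 : 0 < t := by
    have : (0:ℝ) < m := by exact_mod_cast hm
    have : (0:ℝ) < ℓ := by exact_mod_cast hℓ
    positivity
  set N := m * ℓ with hN
  set s0 := Nat.floor t with hs0
  set s' := min s0 n with hs'
  have hs't : (s' : ℝ) ≤ t := by
    have h1 : (s' : ℕ) ≤ s0 := min_le_left _ _
    calc (s' : ℝ) ≤ s0 := by exact_mod_cast h1
      _ ≤ t := Nat.floor_le ht0.le
  -- counting bound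
  have hcard : Nat.card {f : Fin m → Fin ℓ → Fin n //
        ((Finset.univ.biUnion (fun i => Finset.image (f i) Finset.univ)).card : ℝ) < t}
      ≤ Nat.choose n s' * s' ^ N := by
    rw [Nat.card_eq_fintype_card, Fintype.card_subtype]
    have hsub : (Finset.univ.filter (fun f : Fin m → Fin ℓ → Fin n =>
          ((Finset.univ.biUnion (fun i => Finset.image (f i) Finset.univ)).card : ℝ) < t))
        ⊆ (Finset.powersetCard s' (Finset.univ : Finset (Fin n))).biUnion
          (fun S => Fintype.piFinset (fun _ : Fin m => Fintype.piFinset (fun _ : Fin ℓ => S))) := by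
      intro f hf
      rw [Finset.mem_filter] at hf
      set U := Finset.univ.biUnion (fun i => Finset.image (f i) Finset.univ) with hU
      have hUs0 : U.card ≤ s0 := Nat.le_floor hf.2.le
      have hUn : U.card ≤ n := by
        simpa using Finset.card_le_univ U
      have hUcard : U.card ≤ s' := le_min hUs0 hUn
      obtain ⟨S, hUS, hSuniv, hScard⟩ := Finset.exists_subsuperset_card_eq
        (Finset.subset_univ U) hUcard ((min_le_right s0 n).trans_eq (by simp))
      rw [Finset.mem_biUnion]
      refine ⟨S, ?_, ?_⟩
      · rw [Finset.mem_powersetCard]; exact ⟨hSuniv, hScard⟩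
      · rw [Fintype.mem_piFinset]
        intro i
        rw [Fintype.mem_piFinset]
        intro j
        apply hUS
        rw [hU, Finset.mem_biUnion]
        exact ⟨i, Finset.mem_univ i, Finset.mem_image_of_mem _ (Finset.mem_univ j)⟩
    calc (Finset.univ.filter _).card
        ≤ _ := Finset.card_le_card hsub
      _ ≤ ∑ S ∈ Finset.powersetCard s' (Finset.univ : Finset (Fin n)),
            (Fintype.piFinset (fun _ : Fin m => Fintype.piFinset (fun _ : Fin ℓ => S))).card :=
          Finset.card_biUnion_le
      _ = ∑ S ∈ Finset.powersetCard s' (Finset.univ : Finset (Fin n)), s' ^ N := by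
          apply Finset.sum_congr rfl
          intro S hS
          rw [Finset.mem_powersetCard] at hS
          rw [Fintype.card_piFinset_const]
          simp only [Fintype.card_piFinset_const, Fintype.card_fin, hS.2]
          rw [← pow_mul, mul_comm ℓ m]
      _ = Nat.choose n s' * s' ^ N := by
          rw [Finset.sum_const, Finset.card_powersetCard, Finset.card_univ, Fintype.card_fin,
            smul_eq_mul]
  -- denominator
  have hden : (Nat.card (Fin m → Fin ℓ → Fin n) : ℝ) = (n : ℝ) ^ N := by
    rw [Nat.card_eq_fintype_card]
    simp [Fintype.card_fun, ← pow_mul, mul_comm ℓ m]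
    rfl
  have hn0 : (0:ℝ) < n := by exact_mod_cast hn
  have hn1 : (1:ℝ) ≤ n := by exact_mod_cast hn
  -- real bound on numerator
  have hnum : ((Nat.card {f : Fin m → Fin ℓ → Fin n //
        ((Finset.univ.biUnion (fun i => Finset.image (f i) Finset.univ)).card : ℝ) < t}) : ℝ)
      ≤ (n : ℝ) ^ t * t ^ N := by
    calc ((Nat.card _ : ℕ) : ℝ) ≤ ((Nat.choose n s' * s' ^ N : ℕ) : ℝ) := by exact_mod_cast hcard
      _ = (Nat.choose n s' : ℝ) * (s' : ℝ) ^ N := by push_cast; ring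
      _ ≤ (n : ℝ) ^ t * t ^ N := by
          apply mul_le_mul
          · calc (Nat.choose n s' : ℝ) ≤ ((n ^ s' : ℕ) : ℝ) := by
                  exact_mod_cast Nat.choose_le_pow n s'
              _ = (n : ℝ) ^ (s' : ℕ) := by push_cast; ring
              _ = (n : ℝ) ^ ((s' : ℕ) : ℝ) := (Real.rpow_natCast _ _).symm
              _ ≤ (n : ℝ) ^ t := Real.rpow_le_rpow_of_exponent_le hn1 hs't
          · exact pow_le_pow_left₀ (by positivity) hs't N
          · positivity
          · positivity
  -- rewrite RHS
  have hrhs : (t / (n : ℝ) ^ ((1 : ℝ) - 0.01 * δ)) ^ N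
      = (n : ℝ) ^ t * t ^ N / (n : ℝ) ^ N := by
    have hc : (n : ℝ) ^ ((1 : ℝ) - 0.01 * δ) ≠ 0 := by positivity
    rw [div_pow]
    rw [← Real.rpow_natCast ((n:ℝ) ^ ((1:ℝ) - 0.01 * δ)) N, ← Real.rpow_mul hn0.le]
    have hexp : ((1 : ℝ) - 0.01 * δ) * N = (N : ℝ) - t := by
      rw [ht, hN]; push_cast; ring
    rw [hexp, Real.rpow_sub hn0, Real.rpow_natCast]
    field_simp
  rw [hden, hrhs]
  gcongr
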